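/- arXiv:1704.04309 — 2 statements merged into one kernel-verified Lean document; each statement's English description precedes it below -/
import Mathlib

section
/- q-Pochhammer exponential limit: let t ∈ (0,1), ζ ≤ 0, and suppose ξ = ξ(t), θ = θ(t) > 0 are related by θ = t^ξ / (1 − t²). Then as t → 1⁻, 1/(ζ t^ξ; t²)_∞ → exp(ζ θ), uniformly for θ in a compact subset of R_{≥0} and ζ ∈ R_{≤0}. -/
open Real

lemma qPoch_aux_exp_bound {e u : ℝ} (he : 0 < e) (hu : 0 ≤ u) :
    Real.exp (-(Real.log (1 + e * u) / e)) - Real.exp (-u) ≤ 64 * e := by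
  have hx : 0 ≤ e * u := mul_nonneg he.le hu
  have hpos : 0 < 1 + e * u := by linarith
  have hloglb : 1 - (1 + e * u)⁻¹ ≤ Real.log (1 + e * u) :=
    Real.one_sub_inv_le_log_of_pos hpos
  by_cases hc : e * u ≤ 1 / 2
  · -- small regime
    have hinv : (1 + e * u) * (1 + e * u)⁻¹ = 1 := mul_inv_cancel₀ (ne_of_gt hpos)
    have hinv0 : 0 ≤ (1 + e * u)⁻¹ := inv_nonneg.2 hpos.le
    have hA : e * u - (e * u) ^ 2 ≤ Real.log (1 + e * u) := by
      nlinarith [hloglb, hinv, hinv0]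
    have hA' : u - e * u ^ 2 ≤ Real.log (1 + e * u) / e := by
      rw [le_div_iff₀ he]
      nlinarith [hA]
    have h1 : Real.exp (-(Real.log (1 + e * u) / e)) ≤ Real.exp (-u + e * u ^ 2) := by
      apply Real.exp_le_exp.2; linarith
    have h2 : Real.exp (-u + e * u ^ 2) - Real.exp (-u)
        = Real.exp (-u) * (Real.exp (e * u ^ 2) - 1) := by
      rw [Real.exp_add]; ring
    have hv : 0 ≤ e * u ^ 2 := by positivity
    have h3 : Real.exp (e * u ^ 2) - 1 ≤ e * u ^ 2 * Real.exp (e * u ^ 2) := by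
      have := Real.add_one_le_exp (-(e * u ^ 2))
      have hE : Real.exp (-(e * u ^ 2)) * Real.exp (e * u ^ 2) = 1 := by
        rw [← Real.exp_add]; simp
      nlinarith [Real.exp_pos (e * u ^ 2)]
    have h4 : e * u ^ 2 ≤ u / 2 := by nlinarith
    have h5 : Real.exp (e * u ^ 2) ≤ Real.exp (u / 2) := Real.exp_le_exp.2 h4
    have h6 : u ^ 2 ≤ 64 * Real.exp (u / 4) := by
      have h7 : 1 + u / 8 ≤ Real.exp (u / 8) := by
        have := Real.add_one_le_exp (u / 8); linarith
      have h8 : (1 + u / 8) ^ 2 ≤ Real.exp (u / 4) := by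
        have hq : Real.exp (u / 8) * Real.exp (u / 8) = Real.exp (u / 4) := by
          rw [← Real.exp_add]; ring_nf
        nlinarith [Real.exp_pos (u / 8)]
      nlinarith
    have h9 : Real.exp (-u) * Real.exp (u / 2) = Real.exp (-(u / 2)) := by
      rw [← Real.exp_add]; ring_nf
    have h10 : Real.exp (-(u / 2)) * Real.exp (u / 4) = Real.exp (-(u / 4)) := by
      rw [← Real.exp_add]; ring_nf
    have h11 : Real.exp (-(u / 4)) ≤ 1 := Real.exp_le_one_iff.2 (by linarith)
    have h12 : Real.exp (e * u ^ 2) - 1 ≤ e * u ^ 2 * Real.exp (u / 2) :=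
      h3.trans (by gcongr)
    calc Real.exp (-(Real.log (1 + e * u) / e)) - Real.exp (-u)
        ≤ Real.exp (-u + e * u ^ 2) - Real.exp (-u) := by linarith
      _ = Real.exp (-u) * (Real.exp (e * u ^ 2) - 1) := h2
      _ ≤ Real.exp (-u) * (e * u ^ 2 * Real.exp (u / 2)) := by
          have h13 : 0 ≤ Real.exp (e * u ^ 2) - 1 := by
            have := Real.one_le_exp hv; linarith
          exact mul_le_mul_of_nonneg_left h12 (Real.exp_pos (-u)).le
      _ = e * (u ^ 2 * (Real.exp (-u) * Real.exp (u / 2))) := by ring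
      _ = e * (u ^ 2 * Real.exp (-(u / 2))) := by rw [h9]
      _ ≤ e * (64 * Real.exp (u / 4) * Real.exp (-(u / 2))) := by
          apply mul_le_mul_of_nonneg_left _ he.le
          exact mul_le_mul_of_nonneg_right h6 (Real.exp_pos _).le
      _ = 64 * e * Real.exp (-(u / 4)) := by
          rw [show e * (64 * Real.exp (u / 4) * Real.exp (-(u / 2)))
              = 64 * e * (Real.exp (-(u / 2)) * Real.exp (u / 4)) by ring, h10]
      _ ≤ 64 * e * 1 := mul_le_mul_of_nonneg_left h11 (by positivity)
      _ = 64 * e := by ring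
  · -- large regime
    push_neg at hc
    have h1 : (1:ℝ) / 3 ≤ Real.log (1 + e * u) := by
      have hinvle : (1 + e * u)⁻¹ ≤ (3 / 2 : ℝ)⁻¹ := by
        apply inv_anti₀ (by norm_num); linarith
      have h32 : ((3 / 2 : ℝ))⁻¹ = 2/3 := by norm_num
      linarith [hloglb]
    have h2 : 1 / 3 / e ≤ Real.log (1 + e * u) / e := by gcongr
    have h3 : Real.exp (-(Real.log (1 + e * u) / e)) ≤ Real.exp (-(1 / 3 / e)) :=
      Real.exp_le_exp.2 (by linarith)
    have h4 : Real.exp (-(1 / 3 / e)) ≤ 3 * e := by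
      rw [Real.exp_neg]
      rw [inv_le_comm₀ (Real.exp_pos _) (by positivity)]
      have h5 : (3 * e)⁻¹ = 1 / 3 / e := by field_simp
      rw [h5]
      have := Real.add_one_le_exp (1 / 3 / e)
      linarith
    have := Real.exp_pos (-u)
    nlinarith

/-- Infinite q-Pochhammer symbol `(a; q)_∞ = ∏_{k≥0} (1 - a qᵏ)`. -/
noncomputable def qPochInf (a q : ℝ) : ℝ := ∏' k : ℕ, (1 - a * q ^ k)

lemma qPoch_eq_exp {a q : ℝ} (ha : 0 ≤ a) (hq0 : 0 ≤ q) (hq1 : q < 1) :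
    qPochInf (-a) q = Real.exp (∑' k : ℕ, Real.log (1 + a * q ^ k)) := by
  have hpos : ∀ k : ℕ, (0:ℝ) < 1 + a * q ^ k := fun k => by positivity
  have hsumg : Summable (fun k : ℕ => a * q ^ k) :=
    (summable_geometric_of_lt_one hq0 hq1).mul_left a
  have hlogsum : Summable (fun k : ℕ => Real.log (1 + a * q ^ k)) := by
    apply Summable.of_nonneg_of_le
      (fun k => Real.log_nonneg (by nlinarith [pow_nonneg hq0 k]))
      (fun k => ?_) hsumg
    have := Real.log_le_sub_one_of_pos (hpos k)
    linarith
  have key' := Real.rexp_tsum_eq_tprod (f := fun k : ℕ => 1 + a * q ^ k) hpos hlogsum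
  calc qPochInf (-a) q = ∏' k : ℕ, (1 - (-a) * q ^ k) := rfl
    _ = ∏' k : ℕ, (1 + a * q ^ k) := tprod_congr (fun k => by ring)
    _ = Real.exp (∑' k : ℕ, Real.log (1 + a * q ^ k)) := key'.symm

lemma qPoch_log_le {a q : ℝ} (ha : 0 ≤ a) (hq0 : 0 ≤ q) (hq1 : q < 1) :
    (∑' k : ℕ, Real.log (1 + a * q ^ k)) ≤ a * (1 - q)⁻¹ := by
  have hpos : ∀ k : ℕ, (0:ℝ) < 1 + a * q ^ k := fun k => by positivity
  have hsumg : Summable (fun k : ℕ => a * q ^ k) :=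
    (summable_geometric_of_lt_one hq0 hq1).mul_left a
  have hlogsum : Summable (fun k : ℕ => Real.log (1 + a * q ^ k)) := by
    apply Summable.of_nonneg_of_le
      (fun k => Real.log_nonneg (by nlinarith [pow_nonneg hq0 k]))
      (fun k => ?_) hsumg
    have := Real.log_le_sub_one_of_pos (hpos k)
    linarith
  have h1 : (∑' k : ℕ, Real.log (1 + a * q ^ k)) ≤ ∑' k : ℕ, a * q ^ k := by
    apply Summable.tsum_le_tsum _ hlogsum hsumg
    intro k
    have := Real.log_le_sub_one_of_pos (hpos k)
    linarith
  rwa [tsum_mul_left, tsum_geometric_of_lt_one hq0 hq1] at h1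

lemma qPoch_le_log {a q : ℝ} (ha : 0 ≤ a) (hq0 : 0 ≤ q) (hq1 : q < 1) :
    Real.log (1 + a) * (1 - q)⁻¹ ≤ ∑' k : ℕ, Real.log (1 + a * q ^ k) := by
  have hpos : ∀ k : ℕ, (0:ℝ) < 1 + a * q ^ k := fun k => by positivity
  have hsumg : Summable (fun k : ℕ => a * q ^ k) :=
    (summable_geometric_of_lt_one hq0 hq1).mul_left a
  have hlogsum : Summable (fun k : ℕ => Real.log (1 + a * q ^ k)) := by
    apply Summable.of_nonneg_of_le
      (fun k => Real.log_nonneg (by nlinarith [pow_nonneg hq0 k]))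
      (fun k => ?_) hsumg
    have := Real.log_le_sub_one_of_pos (hpos k)
    linarith
  have hterm : ∀ k : ℕ, q ^ k * Real.log (1 + a) ≤ Real.log (1 + a * q ^ k) := by
    intro k
    rw [Real.le_log_iff_exp_le (hpos k)]
    have hrw : Real.exp (q ^ k * Real.log (1 + a)) = (1 + a) ^ (q ^ k : ℝ) := by
      rw [Real.rpow_def_of_pos (by linarith), mul_comm]
    rw [hrw]
    have := rpow_one_add_le_one_add_mul_self (s := a) (by linarith)
      (pow_nonneg hq0 k) (pow_le_one₀ hq0 hq1.le)
    linarith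
  have hsum2 : Summable (fun k : ℕ => q ^ k * Real.log (1 + a)) :=
    (summable_geometric_of_lt_one hq0 hq1).mul_right _
  have h1 := Summable.tsum_le_tsum hterm hsum2 hlogsum
  rwa [tsum_mul_right, tsum_geometric_of_lt_one hq0 hq1, mul_comm] at h1

/-- q-Pochhammer exponential limit: if `θ = t^ξ / (1 − t²)` then, as `t → 1⁻`,
`1/(ζ t^ξ; t²)_∞ → exp(ζ θ)`, uniformly for `θ` in a compact subset of `ℝ_{≥0}`
and `ζ ∈ ℝ_{≤0}`. -/
theorem qPoch_exp_limit (Θ : Set ℝ) (hΘc : IsCompact Θ) (hΘ : Θ ⊆ Set.Ici (0 : ℝ)) :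
    ∀ ε > (0 : ℝ), ∃ δ > (0 : ℝ), ∀ t : ℝ, 0 < t → 1 - δ < t → t < 1 →
      ∀ ζ : ℝ, ζ ≤ 0 → ∀ ξ θ : ℝ, 0 < θ → θ ∈ Θ → θ = t ^ ξ / (1 - t ^ 2) →
        |(qPochInf (ζ * t ^ ξ) (t ^ 2))⁻¹ - Real.exp (ζ * θ)| < ε := by
  intro ε hε
  refine ⟨ε / 256, by positivity, ?_⟩
  intro t ht0 htδ ht1 ζ hζ ξ θ hθpos hθΘ hθeq
  set q : ℝ := t ^ 2 with hqdef
  have hq0 : 0 ≤ q := by positivity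
  have hq1 : q < 1 := by rw [hqdef]; nlinarith
  have hqm : 0 < 1 - q := by linarith
  have htξ : (0:ℝ) < t ^ ξ := Real.rpow_pos_of_pos ht0 ξ
  have htheta : t ^ ξ = θ * (1 - q) := by
    rw [hθeq]; field_simp
  set a : ℝ := -(ζ * t ^ ξ) with hadef
  have ha0 : 0 ≤ a := by
    rw [hadef]; nlinarith
  set u : ℝ := -(ζ * θ) with hudef
  have hu0 : 0 ≤ u := by rw [hudef]; nlinarith
  have hau : a = (1 - q) * u := by rw [hadef, hudef, htheta]; ring
  set L : ℝ := ∑' k : ℕ, Real.log (1 + a * q ^ k) with hLdef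
  have hP : qPochInf (ζ * t ^ ξ) q = Real.exp L := by
    have : ζ * t ^ ξ = -a := by rw [hadef]; ring
    rw [this, qPoch_eq_exp ha0 hq0 hq1]
  have hLle : L ≤ u := by
    have h := qPoch_log_le ha0 hq0 hq1
    have : a * (1 - q)⁻¹ = u := by
      rw [hau]; field_simp
    rw [this] at h; exact h
  have hLge : Real.log (1 + a) * (1 - q)⁻¹ ≤ L := qPoch_le_log ha0 hq0 hq1
  have hinv : (qPochInf (ζ * t ^ ξ) q)⁻¹ = Real.exp (-L) := by
    rw [hP, ← Real.exp_neg]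
  have hζθ : ζ * θ = -u := by rw [hudef]; ring
  rw [hinv, hζθ]
  have hlower : Real.exp (-u) ≤ Real.exp (-L) := Real.exp_le_exp.2 (by linarith)
  rw [abs_of_nonneg (by linarith)]
  have hupper : Real.exp (-L) ≤ Real.exp (-(Real.log (1 + (1 - q) * u) / (1 - q))) := by
    apply Real.exp_le_exp.2
    have : Real.log (1 + (1 - q) * u) / (1 - q) = Real.log (1 + a) * (1 - q)⁻¹ := by
      rw [hau, div_eq_mul_inv]
    rw [this]; linarith
  have hcore := qPoch_aux_exp_bound (e := 1 - q) (u := u) hqm hu0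
  have hfinal : Real.exp (-L) - Real.exp (-u) ≤ 64 * (1 - q) := by linarith
  have hq_small : 1 - q < ε / 64 := by
    have h1 : 1 - t < ε / 256 := by linarith
    have h2 : 1 - q = (1 - t) * (1 + t) := by rw [hqdef]; ring
    nlinarith
  linarith
end

section
/- Exponential bound on the h-function: let t ∈ (0,1), ζ < 0, and h(s) = (ζ t^{s+1}; t²)_∞/(ζ t^{s}; t²)_∞ − 1. Then h takes values in (−1, 0), and for t = e^{−ε} and s = −ε^{-1}x (x ∈ R), one has |h(s)| ≤ |ζ| e^{x}. -/
/-- `h(s) = (ζ t^{s+1}; t²)_∞ / (ζ t^{s}; t²)_∞ − 1`. -/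
noncomputable def hFun (t ζ s : ℝ) : ℝ :=
  qPochInf (ζ * t ^ (s + 1)) (t ^ 2) / qPochInf (ζ * t ^ s) (t ^ 2) - 1

lemma qPochInf_fac_one_le {a q : ℝ} (ha : a ≤ 0) (hq0 : 0 ≤ q) (k : ℕ) :
    1 ≤ 1 - a * q ^ k := by
  nlinarith [mul_nonpos_of_nonpos_of_nonneg ha (pow_nonneg hq0 k)]

lemma qPochInf_log_summable {a q : ℝ} (ha : a ≤ 0) (hq0 : 0 ≤ q) (hq1 : q < 1) :
    Summable (fun k : ℕ => Real.log (1 - a * q ^ k)) := by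
  apply Summable.of_nonneg_of_le
    (fun k => Real.log_nonneg (qPochInf_fac_one_le ha hq0 k))
    (fun k => ?_)
    (((summable_geometric_of_lt_one hq0 hq1).mul_left (-a)))
  have h1 : (0:ℝ) < 1 - a * q ^ k :=
    lt_of_lt_of_le one_pos (qPochInf_fac_one_le ha hq0 k)
  calc Real.log (1 - a * q ^ k) ≤ (1 - a * q ^ k) - 1 := Real.log_le_sub_one_of_pos h1
    _ = -a * q ^ k := by ring

lemma qPochInf_eq_exp {a q : ℝ} (ha : a ≤ 0) (hq0 : 0 ≤ q) (hq1 : q < 1) :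
    qPochInf a q = Real.exp (∑' k : ℕ, Real.log (1 - a * q ^ k)) := by
  have hpos : ∀ (_ : Unit) (k : ℕ), 0 < 1 - a * q ^ k := fun _ k =>
    lt_of_lt_of_le one_pos (qPochInf_fac_one_le ha hq0 k)
  have := Real.rexp_tsum_eq_tprod (f := fun k => 1 - a * q ^ k) (hpos ())
    (qPochInf_log_summable ha hq0 hq1)
  exact this.symm

lemma one_le_qPochInf {a q : ℝ} (ha : a ≤ 0) (hq0 : 0 ≤ q) (hq1 : q < 1) :
    1 ≤ qPochInf a q := by
  rw [qPochInf_eq_exp ha hq0 hq1]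
  exact Real.one_le_exp
    (tsum_nonneg (fun k => Real.log_nonneg (qPochInf_fac_one_le ha hq0 k)))

lemma qPochInf_mono {a a' q : ℝ} (ha : a ≤ 0) (ha' : a' ≤ a) (hq0 : 0 ≤ q) (hq1 : q < 1) :
    qPochInf a q ≤ qPochInf a' q := by
  rw [qPochInf_eq_exp ha hq0 hq1, qPochInf_eq_exp (ha'.trans ha) hq0 hq1]
  apply Real.exp_le_exp.mpr
  refine Summable.tsum_le_tsum (fun k => ?_) (qPochInf_log_summable ha hq0 hq1)
    (qPochInf_log_summable (ha'.trans ha) hq0 hq1)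
  apply Real.log_le_log (lt_of_lt_of_le one_pos (qPochInf_fac_one_le ha hq0 k))
  nlinarith [pow_nonneg hq0 k]

lemma qPochInf_shift {a q : ℝ} (ha : a ≤ 0) (hq0 : 0 ≤ q) (hq1 : q < 1) :
    qPochInf a q = (1 - a) * qPochInf (a * q) q := by
  have haq : a * q ≤ 0 := mul_nonpos_of_nonpos_of_nonneg ha hq0
  rw [qPochInf_eq_exp ha hq0 hq1, qPochInf_eq_exp haq hq0 hq1]
  rw [Summable.tsum_eq_zero_add (qPochInf_log_summable ha hq0 hq1)]
  rw [Real.exp_add, Real.exp_log (by nlinarith : (0:ℝ) < 1 - a * q ^ 0)]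
  have : ∀ k : ℕ, 1 - a * q ^ (k + 1) = 1 - a * q * q ^ k := fun k => by
    rw [pow_succ]; ring
  simp only [pow_zero, mul_one, this]

/-- Exponential bound on the `h`-function: for `t ∈ (0,1)` and `ζ < 0`, `h` takes
values in `(−1,0)`, and for `t = e^{−ε}` and `s = −ε⁻¹x`, `|h(s)| ≤ |ζ| eˣ`. -/
theorem hFun_bounds (t : ℝ) (ht0 : 0 < t) (ht1 : t < 1) (ζ : ℝ) (hζ : ζ < 0) :
    (∀ s : ℝ, hFun t ζ s ∈ Set.Ioo (-1 : ℝ) 0) ∧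
    (∀ ε x : ℝ, 0 < ε → t = Real.exp (-ε) →
      |hFun t ζ (-(ε⁻¹) * x)| ≤ |ζ| * Real.exp x) := by
  have hq0 : (0:ℝ) ≤ t ^ 2 := by positivity
  have hq1 : t ^ 2 < 1 := by nlinarith
  set P : ℝ → ℝ := fun u => qPochInf (ζ * t ^ u) (t ^ 2) with hP
  have haneg : ∀ u : ℝ, ζ * t ^ u ≤ 0 := fun u =>
    mul_nonpos_of_nonpos_of_nonneg hζ.le (Real.rpow_nonneg ht0.le u)
  have honeleP : ∀ u : ℝ, 1 ≤ P u := fun u => one_le_qPochInf (haneg u) hq0 hq1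
  have hPpos : ∀ u : ℝ, 0 < P u := fun u => lt_of_lt_of_le one_pos (honeleP u)
  have hamono : ∀ u v : ℝ, u ≤ v → ζ * t ^ u ≤ ζ * t ^ v := by
    intro u v huv
    have : t ^ v ≤ t ^ u := Real.rpow_le_rpow_of_exponent_ge ht0 ht1.le huv
    nlinarith
  have hPmono : ∀ u v : ℝ, u ≤ v → P v ≤ P u := fun u v huv =>
    qPochInf_mono (haneg v) (hamono u v huv) hq0 hq1
  have hshift : ∀ u : ℝ, P u = (1 - ζ * t ^ u) * P (u + 2) := by
    intro u
    have h2 : ζ * t ^ (u + 2) = ζ * t ^ u * t ^ 2 := by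
      rw [Real.rpow_add ht0, ← Real.rpow_two]
      push_cast
      ring
    rw [hP]
    simp only [h2]
    exact qPochInf_shift (haneg u) hq0 hq1
  -- strict decrease of a ↦ ζ t^s
  have hastrict : ∀ s : ℝ, ζ * t ^ s < ζ * t ^ (s + 1) := by
    intro s
    have : t ^ (s + 1) < t ^ s :=
      Real.rpow_lt_rpow_of_exponent_gt ht0 ht1 (by linarith)
    nlinarith
  have key : ∀ s : ℝ, P (s + 1) < P s ∧ P s ≤ (1 - ζ * t ^ s) * P (s + 1) := by
    intro s
    constructor
    · calc P (s + 1) = (1 - ζ * t ^ (s + 1)) * P (s + 1 + 2) := hshift (s + 1)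
        _ ≤ (1 - ζ * t ^ (s + 1)) * P (s + 2) := by
            have h1 : (1:ℝ) ≤ 1 - ζ * t ^ (s + 1) := by nlinarith [haneg (s + 1)]
            have := hPmono (s + 2) (s + 1 + 2) (by linarith)
            nlinarith
        _ < (1 - ζ * t ^ s) * P (s + 2) := by
            have := hastrict s
            have := hPpos (s + 2)
            nlinarith
        _ = P s := (hshift s).symm
    · calc P s = (1 - ζ * t ^ s) * P (s + 2) := hshift s
        _ ≤ (1 - ζ * t ^ s) * P (s + 1) := by
            have h1 : (1:ℝ) ≤ 1 - ζ * t ^ s := by nlinarith [haneg s]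
            have := hPmono (s + 1) (s + 2) (by linarith)
            nlinarith
  have hIoo : ∀ s : ℝ, hFun t ζ s ∈ Set.Ioo (-1 : ℝ) 0 := by
    intro s
    obtain ⟨hlt, _⟩ := key s
    have hden := hPpos s
    have hnum := hPpos (s + 1)
    constructor
    · have : 0 < P (s + 1) / P s := div_pos hnum hden
      simpa [hFun, hP] using by linarith
    · have : P (s + 1) / P s < 1 := (div_lt_one hden).mpr hlt
      simpa [hFun, hP] using by linarith
  refine ⟨hIoo, ?_⟩
  intro ε x hε htexp
  set s : ℝ := -(ε⁻¹) * x with hs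
  have hts : t ^ s = Real.exp x := by
    have ht0' : 0 < t := ht0
    rw [Real.rpow_def_of_pos ht0', htexp, Real.log_exp]
    congr 1
    rw [hs]
    field_simp
  -- bound: -hFun ≤ |ζ| t^s
  obtain ⟨_, hle⟩ := key s
  have hden := hPpos s
  have hnum := hPpos (s + 1)
  have hone : (0:ℝ) < 1 - ζ * t ^ s := by nlinarith [haneg s]
  have hdivge : 1 / (1 - ζ * t ^ s) ≤ P (s + 1) / P s := by
    rw [div_le_div_iff₀ hone hden]
    nlinarith
  have habs : |hFun t ζ s| = 1 - P (s + 1) / P s := by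
    have h0 : hFun t ζ s < 0 := (hIoo s).2
    rw [abs_of_neg h0]
    simp [hFun, hP]
  rw [habs]
  have h1 : 1 - P (s + 1) / P s ≤ 1 - 1 / (1 - ζ * t ^ s) := by linarith
  have h2 : 1 - 1 / (1 - ζ * t ^ s) = (-ζ * t ^ s) / (1 - ζ * t ^ s) := by
    field_simp
    ring
  have h3 : (-ζ * t ^ s) / (1 - ζ * t ^ s) ≤ -ζ * t ^ s := by
    apply div_le_self (by nlinarith [Real.rpow_nonneg ht0.le s]) (by nlinarith)
  have : |ζ| = -ζ := abs_of_neg hζ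
  rw [this, ← hts]
  linarith
end
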